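/- Let a(b) = c√(1 − 2M/b) with c > 0, M > 0. The second-variation coefficient W(b) = ∂²√(−h)/∂a'∂a' evaluated at a, where h = −8(2 b a a' + a²) (so √(−h) = √(8(2b a a' + a²)) as a function of (a, a')), equals −2√2 b² (1 − 2M/b)/c. In particular W < 0 for all b > 2M and W > 0 for all 0 < b < 2M. -/

import Mathlib

theorem stmt_10
    (c M : ℝ) (hc : 0 < c) (hM : 0 < M)
    (a : ℝ → ℝ) (ha : ∀ b, a b = c * Real.sqrt (1 - 2 * M / b))
    (W : ℝ → ℝ)
    (hW : ∀ b, W b = -2 * Real.sqrt 2 * b ^ 2 * (1 - 2 * M / b) / c) :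
    (∀ b, 2 * M < b →
      iteratedDeriv 2
        (fun y => Real.sqrt (8 * (2 * b * a b * y + (a b) ^ 2))) (deriv a b)
        = W b)
    ∧ (∀ b, 2 * M < b → W b < 0)
    ∧ (∀ b, 0 < b → b < 2 * M → 0 < W b) := by
  have hs2 : (0:ℝ) < Real.sqrt 2 := Real.sqrt_pos.2 (by norm_num)
  have h2m : Real.sqrt 2 * Real.sqrt 2 = 2 := Real.mul_self_sqrt (by norm_num)
  refine ⟨?_, ?_, ?_⟩
  · intro b hb
    have hb0 : (0:ℝ) < b := lt_trans (by positivity) hb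
    have hu : (0:ℝ) < 1 - 2 * M / b := by
      rw [sub_pos, div_lt_one hb0]; exact hb
    have hsu : 0 < Real.sqrt (1 - 2 * M / b) := Real.sqrt_pos.2 hu
    have husq : Real.sqrt (1 - 2 * M / b) * Real.sqrt (1 - 2 * M / b) = 1 - 2 * M / b :=
      Real.mul_self_sqrt hu.le
    -- derivative of a at b
    have h1 : HasDerivAt (fun x : ℝ => 1 - 2 * M / x) (2 * M / b ^ 2) b := by
      have h2 : HasDerivAt (fun x : ℝ => 2 * M / x) ((0 * b - 2 * M * 1) / b ^ 2) b :=
        (hasDerivAt_const b (2 * M)).div (hasDerivAt_id b) hb0.ne'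
      have h3 := (hasDerivAt_const b (1:ℝ)).sub h2
      exact h3.congr_deriv (by ring)
    have hda : HasDerivAt a (c * (1 / (2 * Real.sqrt (1 - 2 * M / b)) * (2 * M / b ^ 2))) b := by
      have h4 := ((Real.hasDerivAt_sqrt hu.ne').comp b h1).const_mul c
      have haF : a = fun x => c * Real.sqrt (1 - 2 * M / x) := funext ha
      rw [haF]
      exact h4
    have hderiva : deriv a b = c * (1 / (2 * Real.sqrt (1 - 2 * M / b)) * (2 * M / b ^ 2)) :=
      hda.deriv
    -- generalize the square roots
    set s : ℝ := Real.sqrt 2 with hs_def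
    set t : ℝ := Real.sqrt (1 - 2 * M / b) with ht_def
    have hs0 : Real.sqrt (8 * c ^ 2) = 2 * s * c := by
      rw [show (8:ℝ) * c ^ 2 = (2 * s * c) ^ 2 by rw [hs_def]; nlinarith [h2m]]
      exact Real.sqrt_sq (by positivity)
    have hA : a b = c * t := ha b
    clear_value s t
    set A : ℝ := a b with hAdef
    clear_value A
    set y₀ : ℝ := deriv a b with hy₀def
    clear_value y₀
    -- value of the inner function at y₀
    have key : 8 * (2 * b * A * y₀ + A ^ 2) = 8 * c ^ 2 := by
      have husq' : b * (t * t) = b - 2 * M := by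
        rw [husq]; field_simp
      rw [hA, hderiva]
      field_simp
      linear_combination husq'
    have h8c : (0:ℝ) < 8 * c ^ 2 := by positivity
    -- linear inner function and its derivative
    have hlin : ∀ y : ℝ, HasDerivAt (fun y => 8 * (2 * b * A * y + A ^ 2))
        (8 * (2 * b * A)) y := by
      intro y
      have h5 := (((hasDerivAt_id y).const_mul (2 * b * A)).add_const (A ^ 2)).const_mul 8
      simpa using h5
    -- derivative of f wherever the inner function is positive
    have hfd : ∀ y : ℝ, 0 < 8 * (2 * b * A * y + A ^ 2) →
        HasDerivAt (fun y => Real.sqrt (8 * (2 * b * A * y + A ^ 2)))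
          (1 / (2 * Real.sqrt (8 * (2 * b * A * y + A ^ 2))) * (8 * (2 * b * A))) y := by
      intro y hy
      exact (Real.hasDerivAt_sqrt hy.ne').comp y (hlin y)
    -- eventual positivity near y₀
    have hopen : IsOpen {y : ℝ | 0 < 8 * (2 * b * A * y + A ^ 2)} := by
      apply isOpen_lt continuous_const
      exact continuous_const.mul ((continuous_const.mul continuous_id).add continuous_const)
    have hmem : y₀ ∈ {y : ℝ | 0 < 8 * (2 * b * A * y + A ^ 2)} := by
      simp only [Set.mem_setOf_eq, key]; exact h8c
    have hev : ∀ᶠ y in nhds y₀, 0 < 8 * (2 * b * A * y + A ^ 2) :=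
      hopen.mem_nhds hmem
    have hev2 : deriv (fun y => Real.sqrt (8 * (2 * b * A * y + A ^ 2)))
        =ᶠ[nhds y₀]
        fun y => 8 * (2 * b * A) / 2 * (Real.sqrt (8 * (2 * b * A * y + A ^ 2)))⁻¹ :=
      hev.mono fun y hy => by rw [(hfd y hy).deriv]; ring
    -- second derivative at y₀
    have hg0 : (0:ℝ) < 8 * (2 * b * A * y₀ + A ^ 2) := by rw [key]; exact h8c
    have hsg0 : Real.sqrt (8 * (2 * b * A * y₀ + A ^ 2)) ≠ 0 :=
      (Real.sqrt_pos.2 hg0).ne'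
    have hsg := (Real.hasDerivAt_sqrt hg0.ne').comp y₀ (hlin y₀)
    have hinv := hsg.inv hsg0
    have hD : HasDerivAt
        (fun y => 8 * (2 * b * A) / 2 * (Real.sqrt (8 * (2 * b * A * y + A ^ 2)))⁻¹)
        ((8 * (2 * b * A) / 2) *
          (-(1 / (2 * Real.sqrt (8 * (2 * b * A * y₀ + A ^ 2))) * (8 * (2 * b * A))) /
            (Real.sqrt (8 * (2 * b * A * y₀ + A ^ 2))) ^ 2)) y₀ :=
      hinv.const_mul (8 * (2 * b * A) / 2)
    have hiter : iteratedDeriv 2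
        (fun y => Real.sqrt (8 * (2 * b * A * y + A ^ 2))) y₀
        = (8 * (2 * b * A) / 2) *
          (-(1 / (2 * Real.sqrt (8 * (2 * b * A * y₀ + A ^ 2))) * (8 * (2 * b * A))) /
            (Real.sqrt (8 * (2 * b * A * y₀ + A ^ 2))) ^ 2) := by
      rw [iteratedDeriv_succ, iteratedDeriv_one, hev2.deriv_eq]
      exact hD.deriv
    rw [hiter, key, hs0, hW b, hA]
    have hsne : s ≠ 0 := by positivity
    rw [← husq]
    field_simp
    linear_combination (16 * (s * s + 2)) * h2m
  · intro b hb
    have hb0 : (0:ℝ) < b := lt_trans (by positivity) hb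
    have hu : (0:ℝ) < 1 - 2 * M / b := by rw [sub_pos, div_lt_one hb0]; exact hb
    rw [hW b]
    have h : 0 < 2 * Real.sqrt 2 * b ^ 2 * (1 - 2 * M / b) / c := by positivity
    have e : -2 * Real.sqrt 2 * b ^ 2 * (1 - 2 * M / b) / c
        = -(2 * Real.sqrt 2 * b ^ 2 * (1 - 2 * M / b) / c) := by ring
    rw [e]; linarith
  · intro b hb0 hb
    have hu : (1:ℝ) - 2 * M / b < 0 := by
      rw [sub_neg]; rw [lt_div_iff₀ hb0]; linarith
    rw [hW b]
    have h : 0 < 2 * Real.sqrt 2 * b ^ 2 * (2 * M / b - 1) / c := by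
      have : 0 < 2 * M / b - 1 := by linarith
      positivity
    have e : -2 * Real.sqrt 2 * b ^ 2 * (1 - 2 * M / b) / c
        = 2 * Real.sqrt 2 * b ^ 2 * (2 * M / b - 1) / c := by ring
    rw [e]; exact h
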